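/- Let n ≥ 8 and let F₆ be the 4-graph on [n] with edge set {{1,2,i,j} : 3 ≤ i < j ≤ n} ∪ {{1,3,4,k} : 5 ≤ k ≤ n} ∪ {{1,3,5,l} : 6 ≤ l ≤ n} ∪ {{1,3,6,7}} ∪ {{1,4,5,l} : 6 ≤ l ≤ n} ∪ {{1,4,6,7}} ∪ {{1,5,6,7}} ∪ {{2,3,4,k} : 5 ≤ k ≤ n} ∪ {{2,3,5,l} : 6 ≤ l ≤ n} ∪ {{2,4,5,6}} ∪ {{2,4,5,7}}. Then λ(F₆) < 0.0169. -/

import Mathlib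

set_option maxHeartbeats 1000000

open Finset

/-- The Lagrangian of a hypergraph `G` with vertex set `[n] = {1, …, n}`. -/
noncomputable def lagN (n : ℕ) (G : Finset (Finset ℕ)) : ℝ :=
  sSup {v : ℝ | ∃ x : ℕ → ℝ, (∀ i, 0 ≤ x i) ∧ (∑ i ∈ Finset.Icc 1 n, x i) = 1 ∧
    v = ∑ e ∈ G, ∏ i ∈ e, x i}

/-- The edges `{a, b, i, j}` over all 2-element subsets `{i, j}` of `s`. -/
def pairsWith (a b : ℕ) (s : Finset ℕ) : Finset (Finset ℕ) :=
  (s.powersetCard 2).image (fun p => insert a (insert b p))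

/-- The edges `{a, i, j, k}` over all 3-element subsets `{i, j, k}` of `s`. -/
def triplesWith (a : ℕ) (s : Finset ℕ) : Finset (Finset ℕ) :=
  (s.powersetCard 3).image (insert a)

/-- The edges `{a, b, c, k}` over all `k ∈ s`. -/
def singlesWith (a b c : ℕ) (s : Finset ℕ) : Finset (Finset ℕ) :=
  s.image (fun k => ({a, b, c, k} : Finset ℕ))

/-- The 4-graph `F₆` on `[n]`. -/
def F6 (n : ℕ) : Finset (Finset ℕ) :=
  pairsWith 1 2 (Finset.Icc 3 n) ∪ singlesWith 1 3 4 (Finset.Icc 5 n) ∪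
    singlesWith 1 3 5 (Finset.Icc 6 n) ∪ {({1, 3, 6, 7} : Finset ℕ)} ∪
    singlesWith 1 4 5 (Finset.Icc 6 n) ∪ {({1, 4, 6, 7} : Finset ℕ)} ∪
    {({1, 5, 6, 7} : Finset ℕ)} ∪ singlesWith 2 3 4 (Finset.Icc 5 n) ∪
    singlesWith 2 3 5 (Finset.Icc 6 n) ∪ {({2, 4, 5, 6} : Finset ℕ)} ∪
    {({2, 4, 5, 7} : Finset ℕ)}

/- ### Auxiliary lemmas -/

lemma F6aux_cubic_ineq (m s : ℝ) (hm : 0 ≤ m) (hs : 0 ≤ s) :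
    m^3/27 + m^2*s/3 + m*s^2/4 ≤ 0.08*(m+s)^3 := by
  nlinarith [mul_nonneg (sq_nonneg (2*m-3*s)) hm, mul_nonneg (sq_nonneg (2*m-3*s)) hs]

lemma F6aux_amgm3 (c d e : ℝ) (hc : 0 ≤ c) (hd : 0 ≤ d) (he : 0 ≤ e) :
    c*d*e ≤ (c+d+e)^3/27 := by
  nlinarith [mul_nonneg hc (sq_nonneg (d-e)), mul_nonneg hd (sq_nonneg (c-e)),
    mul_nonneg he (sq_nonneg (c-d)), mul_nonneg hc (sq_nonneg (c-d)),
    mul_nonneg hd (sq_nonneg (d-e)), mul_nonneg he (sq_nonneg (c-e)),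
    mul_nonneg hc (sq_nonneg (c-e)), mul_nonneg hd (sq_nonneg (c-d)),
    mul_nonneg he (sq_nonneg (d-e))]

lemma F6aux_e2_3 (c d e : ℝ) : c*d+c*e+d*e ≤ (c+d+e)^2/3 := by
  nlinarith [sq_nonneg (c-d), sq_nonneg (c-e), sq_nonneg (d-e)]

lemma F6aux_final2 (p t : ℝ) (hp : 0 ≤ p) (ht : 0 ≤ t) (hpt : p + t = 1) :
    p^2*t^2/8 + 0.08*p*t^3 ≤ 0.0168 := by
  nlinarith [sq_nonneg (p - 0.3695), sq_nonneg (t - 0.6305), sq_nonneg (p*t - 0.233),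
    mul_nonneg hp ht, mul_nonneg (mul_nonneg hp hp) ht,
    mul_nonneg (mul_nonneg hp ht) ht, sq_nonneg (p*t), sq_nonneg ((p-0.3695)*(t-0.6305)),
    mul_nonneg hp (sq_nonneg (p - 0.3695)), mul_nonneg ht (sq_nonneg (p - 0.3695))]

lemma F6aux_key_ineq (a b c d e f g r : ℝ) (ha : 0 ≤ a) (hb : 0 ≤ b) (hc : 0 ≤ c)
    (hd : 0 ≤ d) (he : 0 ≤ e) (hf : 0 ≤ f) (hg : 0 ≤ g) (hr : 0 ≤ r)
    (hsum : a+b+c+d+e+f+g+r = 1) :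
    a*b*((c+d+e+f+g+r)^2/2)
      + a*c*d*(e+f+g+r) + a*c*e*(f+g+r) + a*c*f*g + a*d*e*(f+g+r) + a*d*f*g + a*e*f*g
      + b*c*d*(e+f+g+r) + b*c*e*(f+g+r) + b*d*e*f + b*d*e*g ≤ 0.0168 := by
  have hfg : f*g ≤ (f+g+r)^2/4 := by
    nlinarith [sq_nonneg (f-g), mul_nonneg (add_nonneg hf hg) hr, sq_nonneg r]
  have hT : a*c*d*(e+f+g+r) + a*c*e*(f+g+r) + a*c*f*g + a*d*e*(f+g+r) + a*d*f*g + a*e*f*g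
      + b*c*d*(e+f+g+r) + b*c*e*(f+g+r) + b*d*e*f + b*d*e*g
      ≤ (a+b) * (c*d*e + (c*d+c*e+d*e)*(f+g+r) + (c+d+e)*((f+g+r)^2/4)) := by
    have h1 : 0 ≤ b*d*e*r := by positivity
    have h2 : 0 ≤ b*(c+d+e)*((f+g+r)^2/4) := by positivity
    have h3 : 0 ≤ a*(c+d+e)*((f+g+r)^2/4 - f*g) := by
      apply mul_nonneg (by positivity); linarith
    linarith [h1, h2, h3]
  have hB : c*d*e + (c*d+c*e+d*e)*(f+g+r) + (c+d+e)*((f+g+r)^2/4)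
      ≤ 0.08*(c+d+e+f+g+r)^3 := by
    have h1 := F6aux_amgm3 c d e hc hd he
    have h3 : (c*d+c*e+d*e)*(f+g+r) ≤ ((c+d+e)^2/3)*(f+g+r) :=
      mul_le_mul_of_nonneg_right (by linarith [F6aux_e2_3 c d e]) (by positivity)
    have h4 := F6aux_cubic_ineq (c+d+e) (f+g+r) (by positivity) (by positivity)
    have h5 : ((c+d+e)+(f+g+r))^3 = (c+d+e+f+g+r)^3 := by ring
    rw [h5] at h4
    linarith
  have hTt : (a+b) * (c*d*e + (c*d+c*e+d*e)*(f+g+r) + (c+d+e)*((f+g+r)^2/4))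
      ≤ (a+b) * (0.08*(c+d+e+f+g+r)^3) :=
    mul_le_mul_of_nonneg_left hB (by positivity)
  have htpart : a*b*((c+d+e+f+g+r)^2/2) ≤ (a+b)^2*(c+d+e+f+g+r)^2/8 := by
    linarith [mul_nonneg (sq_nonneg (a-b)) (sq_nonneg (c+d+e+f+g+r))]
  have hfinal := F6aux_final2 (a+b) (c+d+e+f+g+r) (by positivity) (by positivity) (by linarith)
  linarith [hT, hTt, htpart, hfinal]

lemma F6aux_sum_union_le (x : ℕ → ℝ) (hx : ∀ i, 0 ≤ x i) (A B : Finset (Finset ℕ)) :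
    ∑ e ∈ A ∪ B, ∏ i ∈ e, x i ≤ (∑ e ∈ A, ∏ i ∈ e, x i) + ∑ e ∈ B, ∏ i ∈ e, x i := by
  have h1 := Finset.sum_union_inter (s₁ := A) (s₂ := B) (f := fun e => ∏ i ∈ e, x i)
  have h2 : 0 ≤ ∑ e ∈ A ∩ B, ∏ i ∈ e, x i :=
    Finset.sum_nonneg fun e _ => Finset.prod_nonneg fun i _ => hx i
  linarith

lemma F6aux_e2_le (x : ℕ → ℝ) (hx : ∀ i, 0 ≤ x i) (s : Finset ℕ) :
    2 * ∑ p ∈ s.powersetCard 2, ∏ i ∈ p, x i ≤ (∑ i ∈ s, x i)^2 := by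
  classical
  induction s using Finset.induction_on with
  | empty =>
    rw [show ((∅ : Finset ℕ).powersetCard 2) = ∅ from rfl]
    simp
  | insert a s' ha ih =>
    have hps := Finset.powersetCard_succ_insert ha 1
    norm_num at hps
    rw [hps]
    rw [Finset.sum_union ?disj]
    case disj =>
      rw [Finset.disjoint_left]
      intro p hp hp2
      simp only [Finset.mem_powersetCard, Finset.mem_image] at hp hp2
      obtain ⟨q, hq, rfl⟩ := hp2
      exact ha (hp.1 (Finset.mem_insert_self a q))
    have himg : ∑ p ∈ (s'.powersetCard 1).image (insert a), ∏ i ∈ p, x i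
        = x a * ∑ i ∈ s', x i := by
      rw [Finset.sum_image ?inj]
      case inj =>
        intro p hp q hq hpq
        simp only [Finset.mem_coe, Finset.mem_powersetCard] at hp hq
        have hap : a ∉ p := fun h => ha (hp.1 h)
        have haq : a ∉ q := fun h => ha (hq.1 h)
        rw [← Finset.erase_insert hap, ← Finset.erase_insert haq, hpq]
      rw [Finset.powersetCard_one, Finset.sum_map, Finset.mul_sum]
      refine Finset.sum_congr rfl fun i hi => ?_
      have hai : a ∉ ({i} : Finset ℕ) := by
        simp only [Finset.mem_singleton]
        rintro rfl; exact ha hi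
      simp [Finset.prod_insert hai]
    rw [himg, Finset.sum_insert ha]
    have hT : 0 ≤ ∑ i ∈ s', x i := Finset.sum_nonneg fun i _ => hx i
    nlinarith [sq_nonneg (x a), hx a]

lemma F6aux_singles_sum (x : ℕ → ℝ) (a b c k0 n : ℕ) (hab : a < b) (hbc : b < c)
    (hck : c < k0) :
    ∑ e ∈ singlesWith a b c (Finset.Icc k0 n), ∏ i ∈ e, x i
      = x a * x b * x c * ∑ k ∈ Finset.Icc k0 n, x k := by
  unfold singlesWith
  rw [Finset.sum_image ?inj]
  case inj =>
    intro k hk k' hk' h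
    simp only [Finset.mem_coe, Finset.mem_Icc] at hk hk'
    beta_reduce at h
    have : k ∈ ({a, b, c, k'} : Finset ℕ) := by
      rw [← h]; simp
    simp only [Finset.mem_insert, Finset.mem_singleton] at this
    omega
  rw [Finset.mul_sum]
  refine Finset.sum_congr rfl fun k hk => ?_
  simp only [Finset.mem_Icc] at hk
  have h1 : a ∉ ({b, c, k} : Finset ℕ) := by
    simp only [Finset.mem_insert, Finset.mem_singleton]; omega
  have h2 : b ∉ ({c, k} : Finset ℕ) := by
    simp only [Finset.mem_insert, Finset.mem_singleton]; omega
  have h3 : c ∉ ({k} : Finset ℕ) := by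
    simp only [Finset.mem_singleton]; omega
  rw [show ({a,b,c,k} : Finset ℕ) = insert a (insert b (insert c {k})) from rfl,
    Finset.prod_insert h1, Finset.prod_insert h2, Finset.prod_insert h3,
    Finset.prod_singleton]
  ring

lemma F6aux_pairs_sum (x : ℕ → ℝ) (n : ℕ) :
    ∑ e ∈ pairsWith 1 2 (Finset.Icc 3 n), ∏ i ∈ e, x i
      = x 1 * x 2 * ∑ p ∈ (Finset.Icc 3 n).powersetCard 2, ∏ i ∈ p, x i := by
  unfold pairsWith
  rw [Finset.sum_image ?inj]
  case inj =>
    intro p hp q hq h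
    simp only [Finset.mem_coe, Finset.mem_powersetCard] at hp hq
    beta_reduce at h
    ext z
    constructor
    · intro hz
      have h3 : 3 ≤ z := (Finset.mem_Icc.1 (hp.1 hz)).1
      have : z ∈ insert 1 (insert 2 q) := by rw [← h]; simp [hz]
      simp only [Finset.mem_insert] at this
      rcases this with h|h|h
      · omega
      · omega
      · exact h
    · intro hz
      have h3 : 3 ≤ z := (Finset.mem_Icc.1 (hq.1 hz)).1
      have : z ∈ insert 1 (insert 2 p) := by rw [h]; simp [hz]
      simp only [Finset.mem_insert] at this
      rcases this with h|h|h
      · omega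
      · omega
      · exact h
  rw [Finset.mul_sum]
  refine Finset.sum_congr rfl fun p hp => ?_
  simp only [Finset.mem_powersetCard] at hp
  have h2 : (2:ℕ) ∉ p := fun h => by have := (Finset.mem_Icc.1 (hp.1 h)).1; omega
  have h1 : (1:ℕ) ∉ insert 2 p := by
    simp only [Finset.mem_insert]
    rintro (h|h)
    · omega
    · have := (Finset.mem_Icc.1 (hp.1 h)).1; omega
  rw [Finset.prod_insert h1, Finset.prod_insert h2]
  ring

lemma F6aux_quad_prod (x : ℕ → ℝ) (a b c k : ℕ) (hab : a < b) (hbc : b < c) (hck : c < k) :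
    ∏ i ∈ ({a, b, c, k} : Finset ℕ), x i = x a * x b * x c * x k := by
  have h1 : a ∉ ({b, c, k} : Finset ℕ) := by
    simp only [Finset.mem_insert, Finset.mem_singleton]; omega
  have h2 : b ∉ ({c, k} : Finset ℕ) := by
    simp only [Finset.mem_insert, Finset.mem_singleton]; omega
  have h3 : c ∉ ({k} : Finset ℕ) := by
    simp only [Finset.mem_singleton]; omega
  rw [show ({a,b,c,k} : Finset ℕ) = insert a (insert b (insert c {k})) from rfl,
    Finset.prod_insert h1, Finset.prod_insert h2, Finset.prod_insert h3,
    Finset.prod_singleton]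
  ring

lemma F6aux_tail (x : ℕ → ℝ) (k n : ℕ) (hk : k ≤ 7) (hn : 7 ≤ n) :
    ∑ i ∈ Finset.Icc (k+1) n, x i
      = (∑ i ∈ Finset.Ioc k 7, x i) + ∑ i ∈ Finset.Icc 8 n, x i := by
  rw [Finset.Icc_add_one_left_eq_Ioc, show (8:ℕ) = 7+1 from rfl, Finset.Icc_add_one_left_eq_Ioc,
    ← Finset.sum_Ioc_consecutive x hk hn]

lemma F6aux_main (n : ℕ) (hn : 8 ≤ n) (x : ℕ → ℝ) (hx : ∀ i, 0 ≤ x i)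
    (hs1 : ∑ i ∈ Finset.Icc 1 n, x i = 1) :
    ∑ e ∈ F6 n, ∏ i ∈ e, x i ≤ 0.0168 := by
  classical
  set A1 := pairsWith 1 2 (Finset.Icc 3 n)
  set A2 := singlesWith 1 3 4 (Finset.Icc 5 n)
  set A3 := singlesWith 1 3 5 (Finset.Icc 6 n)
  set A4 := ({({1, 3, 6, 7} : Finset ℕ)} : Finset (Finset ℕ))
  set A5 := singlesWith 1 4 5 (Finset.Icc 6 n)
  set A6 := ({({1, 4, 6, 7} : Finset ℕ)} : Finset (Finset ℕ))
  set A7 := ({({1, 5, 6, 7} : Finset ℕ)} : Finset (Finset ℕ))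
  set A8 := singlesWith 2 3 4 (Finset.Icc 5 n)
  set A9 := singlesWith 2 3 5 (Finset.Icc 6 n)
  set A10 := ({({2, 4, 5, 6} : Finset ℕ)} : Finset (Finset ℕ))
  set A11 := ({({2, 4, 5, 7} : Finset ℕ)} : Finset (Finset ℕ))
  have hF : F6 n = A1 ∪ A2 ∪ A3 ∪ A4 ∪ A5 ∪ A6 ∪ A7 ∪ A8 ∪ A9 ∪ A10 ∪ A11 := rfl
  have step := F6aux_sum_union_le x hx
  have hsplit : ∑ e ∈ F6 n, ∏ i ∈ e, x i ≤
      (∑ e ∈ A1, ∏ i ∈ e, x i) + (∑ e ∈ A2, ∏ i ∈ e, x i) + (∑ e ∈ A3, ∏ i ∈ e, x i)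
      + (∑ e ∈ A4, ∏ i ∈ e, x i) + (∑ e ∈ A5, ∏ i ∈ e, x i) + (∑ e ∈ A6, ∏ i ∈ e, x i)
      + (∑ e ∈ A7, ∏ i ∈ e, x i) + (∑ e ∈ A8, ∏ i ∈ e, x i) + (∑ e ∈ A9, ∏ i ∈ e, x i)
      + (∑ e ∈ A10, ∏ i ∈ e, x i) + (∑ e ∈ A11, ∏ i ∈ e, x i) := by
    rw [hF]
    have u1 := step (A1 ∪ A2) A3
    have u2 := step A1 A2
    have u3 := step (A1 ∪ A2 ∪ A3) A4
    have u4 := step (A1 ∪ A2 ∪ A3 ∪ A4) A5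
    have u5 := step (A1 ∪ A2 ∪ A3 ∪ A4 ∪ A5) A6
    have u6 := step (A1 ∪ A2 ∪ A3 ∪ A4 ∪ A5 ∪ A6) A7
    have u7 := step (A1 ∪ A2 ∪ A3 ∪ A4 ∪ A5 ∪ A6 ∪ A7) A8
    have u8 := step (A1 ∪ A2 ∪ A3 ∪ A4 ∪ A5 ∪ A6 ∪ A7 ∪ A8) A9
    have u9 := step (A1 ∪ A2 ∪ A3 ∪ A4 ∪ A5 ∪ A6 ∪ A7 ∪ A8 ∪ A9) A10
    have u10 := step (A1 ∪ A2 ∪ A3 ∪ A4 ∪ A5 ∪ A6 ∪ A7 ∪ A8 ∪ A9 ∪ A10) A11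
    linarith
  -- sum decompositions
  have h7n : 7 ≤ n := by omega
  have ht := F6aux_tail x 2 n (by norm_num) h7n
  have hu := F6aux_tail x 4 n (by norm_num) h7n
  have hss := F6aux_tail x 5 n (by norm_num) h7n
  have h1n := F6aux_tail x 0 n (by norm_num) h7n
  norm_num [show (Finset.Ioc 2 7 : Finset ℕ) = {3,4,5,6,7} from by decide,
    show (Finset.Ioc 4 7 : Finset ℕ) = {5,6,7} from by decide,
    show (Finset.Ioc 5 7 : Finset ℕ) = {6,7} from by decide,
    show (Finset.Ioc 0 7 : Finset ℕ) = {1,2,3,4,5,6,7} from by decide,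
    Finset.sum_insert, Finset.mem_insert] at ht hu hss h1n
  set r := ∑ i ∈ Finset.Icc 8 n, x i with hr_def
  have hr : 0 ≤ r := Finset.sum_nonneg fun i _ => hx i
  rw [h1n] at hs1
  -- compute the pieces
  have hA1 : ∑ e ∈ A1, ∏ i ∈ e, x i
      ≤ x 1 * x 2 * ((x 3 + x 4 + x 5 + x 6 + x 7 + r)^2/2) := by
    rw [F6aux_pairs_sum x n]
    have he2 := F6aux_e2_le x hx (Finset.Icc 3 n)
    rw [ht] at he2
    nlinarith [mul_nonneg (hx 1) (hx 2)]
  have hA2 : ∑ e ∈ A2, ∏ i ∈ e, x i = x 1 * x 3 * x 4 * (x 5 + x 6 + x 7 + r) := by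
    rw [show A2 = singlesWith 1 3 4 (Finset.Icc 5 n) from rfl,
      F6aux_singles_sum x 1 3 4 5 n (by norm_num) (by norm_num) (by norm_num), hu]
    ring
  have hA3 : ∑ e ∈ A3, ∏ i ∈ e, x i = x 1 * x 3 * x 5 * (x 6 + x 7 + r) := by
    rw [show A3 = singlesWith 1 3 5 (Finset.Icc 6 n) from rfl,
      F6aux_singles_sum x 1 3 5 6 n (by norm_num) (by norm_num) (by norm_num), hss]
  have hA5 : ∑ e ∈ A5, ∏ i ∈ e, x i = x 1 * x 4 * x 5 * (x 6 + x 7 + r) := by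
    rw [show A5 = singlesWith 1 4 5 (Finset.Icc 6 n) from rfl,
      F6aux_singles_sum x 1 4 5 6 n (by norm_num) (by norm_num) (by norm_num), hss]
  have hA8 : ∑ e ∈ A8, ∏ i ∈ e, x i = x 2 * x 3 * x 4 * (x 5 + x 6 + x 7 + r) := by
    rw [show A8 = singlesWith 2 3 4 (Finset.Icc 5 n) from rfl,
      F6aux_singles_sum x 2 3 4 5 n (by norm_num) (by norm_num) (by norm_num), hu]
    ring
  have hA9 : ∑ e ∈ A9, ∏ i ∈ e, x i = x 2 * x 3 * x 5 * (x 6 + x 7 + r) := by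
    rw [show A9 = singlesWith 2 3 5 (Finset.Icc 6 n) from rfl,
      F6aux_singles_sum x 2 3 5 6 n (by norm_num) (by norm_num) (by norm_num), hss]
  have hA4 : ∑ e ∈ A4, ∏ i ∈ e, x i = x 1 * x 3 * x 6 * x 7 := by
    rw [show A4 = ({({1,3,6,7} : Finset ℕ)} : Finset (Finset ℕ)) from rfl,
      Finset.sum_singleton, F6aux_quad_prod x 1 3 6 7 (by norm_num) (by norm_num) (by norm_num)]
  have hA6 : ∑ e ∈ A6, ∏ i ∈ e, x i = x 1 * x 4 * x 6 * x 7 := by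
    rw [show A6 = ({({1,4,6,7} : Finset ℕ)} : Finset (Finset ℕ)) from rfl,
      Finset.sum_singleton, F6aux_quad_prod x 1 4 6 7 (by norm_num) (by norm_num) (by norm_num)]
  have hA7 : ∑ e ∈ A7, ∏ i ∈ e, x i = x 1 * x 5 * x 6 * x 7 := by
    rw [show A7 = ({({1,5,6,7} : Finset ℕ)} : Finset (Finset ℕ)) from rfl,
      Finset.sum_singleton, F6aux_quad_prod x 1 5 6 7 (by norm_num) (by norm_num) (by norm_num)]
  have hA10 : ∑ e ∈ A10, ∏ i ∈ e, x i = x 2 * x 4 * x 5 * x 6 := by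
    rw [show A10 = ({({2,4,5,6} : Finset ℕ)} : Finset (Finset ℕ)) from rfl,
      Finset.sum_singleton, F6aux_quad_prod x 2 4 5 6 (by norm_num) (by norm_num) (by norm_num)]
  have hA11 : ∑ e ∈ A11, ∏ i ∈ e, x i = x 2 * x 4 * x 5 * x 7 := by
    rw [show A11 = ({({2,4,5,7} : Finset ℕ)} : Finset (Finset ℕ)) from rfl,
      Finset.sum_singleton, F6aux_quad_prod x 2 4 5 7 (by norm_num) (by norm_num) (by norm_num)]
  have key := F6aux_key_ineq (x 1) (x 2) (x 3) (x 4) (x 5) (x 6) (x 7) r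
    (hx 1) (hx 2) (hx 3) (hx 4) (hx 5) (hx 6) (hx 7) hr (by linarith)
  linarith [hsplit, hA1, hA2, hA3, hA4, hA5, hA6, hA7, hA8, hA9, hA10, hA11, key]

/-- For `n ≥ 8`, `λ(F₆) < 0.0169`. -/
theorem lagrangian_F6 (n : ℕ) (hn : 8 ≤ n) :
    lagN n (F6 n) < 0.0169 := by
  have hne : {v : ℝ | ∃ x : ℕ → ℝ, (∀ i, 0 ≤ x i) ∧ (∑ i ∈ Finset.Icc 1 n, x i) = 1 ∧
      v = ∑ e ∈ F6 n, ∏ i ∈ e, x i}.Nonempty := by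
    refine ⟨_, fun i => if i = 1 then (1:ℝ) else 0, fun i => ?_, ?_, rfl⟩
    · dsimp only
      split_ifs <;> norm_num
    · rw [Finset.sum_ite_eq' (Finset.Icc 1 n) 1 (fun _ => (1:ℝ))]
      rw [if_pos (Finset.mem_Icc.2 ⟨le_refl 1, by omega⟩)]
  have hub : ∀ v ∈ {v : ℝ | ∃ x : ℕ → ℝ, (∀ i, 0 ≤ x i) ∧ (∑ i ∈ Finset.Icc 1 n, x i) = 1 ∧
      v = ∑ e ∈ F6 n, ∏ i ∈ e, x i}, v ≤ 0.0168 := by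
    rintro v ⟨x, hx, hs1, rfl⟩
    exact F6aux_main n hn x hx hs1
  have : lagN n (F6 n) ≤ 0.0168 := csSup_le hne hub
  linarith [this]
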